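/- (Correspondence principle) Let n ≥ 2, θ, λ ∈ ℝ, and let u be a twice continuously differentiable function on 𝔹. Then on 𝔹 one has the identity L_θ[M^λ[u]] = M^λ[L_{θ-λ}[u]] + 4λ(λ-1-2θ) M^{λ-1}[u]. -/

import Mathlib

open MeasureTheory
open scoped BigOperators ENNReal Classical

noncomputable section

/-- Euclidean space `ℝⁿ`. -/
abbrev E (n : ℕ) := EuclideanSpace ℝ (Fin n)

/-- The open unit ball of `ℝⁿ`. -/
def unitBall (n : ℕ) : Set (E n) := Metric.ball 0 1

/-- The Laplacian `Δf = ∑ ∂²f/∂xᵢ²`. -/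
def lap {n : ℕ} (f : E n → ℂ) (x : E n) : ℂ :=
  ∑ i : Fin n,
    fderiv ℝ (fun y => fderiv ℝ f y (EuclideanSpace.single i 1)) x (EuclideanSpace.single i 1)

/-- The `N`-th iterate `Δ^N` of the Laplacian. -/
def lapIter {n : ℕ} (N : ℕ) (f : E n → ℂ) : E n → ℂ := lap^[N] f

/-- The radial derivative `R[u](x) = x ⋅ ∇u(x)`. -/
def radialDeriv {n : ℕ} (f : E n → ℂ) (x : E n) : ℂ := fderiv ℝ f x x

/-- The operator `L_θ[u] = (1-|x|²) Δu + 4θ R[u] + 2θ(n-2-2θ) u`. -/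
def Lop {n : ℕ} (θ : ℝ) (f : E n → ℂ) (x : E n) : ℂ :=
  ((1 - ‖x‖ ^ 2 : ℝ) : ℂ) * lap f x + ((4 * θ : ℝ) : ℂ) * radialDeriv f x
    + ((2 * θ * ((n : ℝ) - 2 - 2 * θ) : ℝ) : ℂ) * f x

/-- The multiplication operator `M^j[u](x) = (1-|x|²)^j u(x)` for integer `j`. -/
def Mnat {n : ℕ} (j : ℕ) (f : E n → ℂ) (x : E n) : ℂ :=
  (((1 - ‖x‖ ^ 2) ^ j : ℝ) : ℂ) * f x

/-- The multiplication operator `M^λ[u](x) = (1-|x|²)^λ u(x)` for real `λ`. -/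
def Mr {n : ℕ} (lam : ℝ) (f : E n → ℂ) (x : E n) : ℂ :=
  (((1 - ‖x‖ ^ 2) ^ lam : ℝ) : ℂ) * f x

/-- `u` is `N`-harmonic on the unit ball: `u` is `C^{2N}` there and `Δ^N u = 0`. -/
def NHarm (n N : ℕ) (u : E n → ℂ) : Prop :=
  ContDiffOn ℝ (2 * N : ℕ) u (unitBall n) ∧ ∀ x ∈ unitBall n, lapIter N u x = 0

/-- `‖u‖_{p,α}^p = ∫_𝔹 |u|^p (1-|x|²)^α dV`, as a lower integral. -/
def wInt (n : ℕ) (p α : ℝ) (u : E n → ℂ) : ℝ≥0∞ :=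
  ∫⁻ x in unitBall n, ENNReal.ofReal (‖u x‖ ^ p * (1 - ‖x‖ ^ 2) ^ α)

/-- Membership in `PH^p_{N,α}(𝔹)`. -/
def memPH (n N : ℕ) (p α : ℝ) (u : E n → ℂ) : Prop :=
  NHarm n N u ∧ wInt n p α u < ⊤

/-- The quantities `b_{j,N}(p)`. -/
def bCoef (n N j : ℕ) (p : ℝ) : ℝ :=
  if j = 0 then -1 - ((N : ℝ) - 1) * p
  else max (-1 - ((N : ℝ) + (j : ℝ) - 1) * p) (-(n : ℝ) - ((N : ℝ) - (j : ℝ) - (n : ℝ) + 1) * p)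

/-- The quantities `a_{j,N}(p)`. -/
def aCoef (n N j : ℕ) (p : ℝ) : ℝ :=
  min (bCoef n N j p) (-1 - ((N : ℝ) - (j : ℝ)) * p)

end

noncomputable section Stmt4Aux

/-- Derivative CLM of `y ↦ ((1-‖y‖²)^μ : ℂ)`. -/
def dV {n : ℕ} (μ : ℝ) (x : E n) : E n →L[ℝ] ℂ :=
  (-2 * μ * (1 - ‖x‖ ^ 2) ^ (μ - 1) : ℝ) • (Complex.ofRealCLM.comp (innerSL ℝ x))

lemma dV_apply {n : ℕ} (μ : ℝ) (x v : E n) :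
    dV μ x v = ((-2 * μ * (1 - ‖x‖ ^ 2) ^ (μ - 1) * (inner ℝ x v : ℝ) : ℝ) : ℂ) := by
  simp only [dV, ContinuousLinearMap.smul_apply, ContinuousLinearMap.comp_apply,
    innerSL_apply_apply, Complex.ofRealCLM_apply, Complex.real_smul, Complex.ofReal_mul]

lemma hasFDerivAt_V {n : ℕ} (μ : ℝ) {x : E n} (hx : ‖x‖ < 1) :
    HasFDerivAt (fun y : E n => (((1 - ‖y‖ ^ 2) ^ μ : ℝ) : ℂ)) (dV μ x) x := by
  have hpos : (0:ℝ) < 1 - ‖x‖ ^ 2 := by nlinarith [norm_nonneg x]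
  have h0 : HasFDerivAt (fun y : E n => 1 - ‖y‖ ^ 2) ((-2 : ℝ) • (innerSL ℝ x)) x := by
    have h := (hasFDerivAt_id x).norm_sq
    have h' : HasFDerivAt (fun y : E n => 1 - ‖y‖ ^ 2) _ x := (hasFDerivAt_const (1:ℝ) x).sub h
    refine h'.congr_fderiv ?_
    ext v
    simp [two_smul]
  have h1 : HasFDerivAt (fun y : E n => (1 - ‖y‖ ^ 2) ^ μ)
      ((μ * (1 - ‖x‖ ^ 2) ^ (μ - 1)) • ((-2 : ℝ) • (innerSL ℝ x))) x := by
    have := (Real.hasDerivAt_rpow_const (x := 1 - ‖x‖ ^ 2) (p := μ) (Or.inl hpos.ne')).comp_hasFDerivAt x h0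
    exact this
  have h2 : HasFDerivAt (fun y : E n => (((1 - ‖y‖ ^ 2) ^ μ : ℝ) : ℂ)) _ x :=
    Complex.ofRealCLM.hasFDerivAt.comp x h1
  refine (h2.congr_fderiv ?_)
  ext v
  simp [dV]
  ring

lemma dV_single {n : ℕ} (μ : ℝ) (x : E n) (i : Fin n) :
    dV μ x (EuclideanSpace.single i (1:ℝ)) =
      ((-2 * μ * (1 - ‖x‖ ^ 2) ^ (μ - 1) * x i : ℝ) : ℂ) := by
  rw [dV_apply]
  norm_num [EuclideanSpace.inner_single_right]

lemma dV_self {n : ℕ} (μ : ℝ) (x : E n) :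
    dV μ x x = ((-2 * μ * (1 - ‖x‖ ^ 2) ^ (μ - 1) * ‖x‖ ^ 2 : ℝ) : ℂ) := by
  rw [dV_apply, real_inner_self_eq_norm_sq]

lemma sum_single {n : ℕ} (x : E n) :
    ∑ i, x i • EuclideanSpace.single i (1:ℝ) = x := by
  have := (EuclideanSpace.basisFun (Fin n) ℝ).sum_repr x
  simpa [EuclideanSpace.basisFun_apply, EuclideanSpace.basisFun_repr] using this

lemma clm_apply_self {n : ℕ} (L : E n →L[ℝ] ℂ) (x : E n) :
    L x = ∑ i, ((x i : ℝ) : ℂ) * L (EuclideanSpace.single i (1:ℝ)) := by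
  conv_lhs => rw [← sum_single x]
  rw [map_sum]
  simp [Complex.real_smul]

lemma sum_sq {n : ℕ} (x : E n) : ∑ i, (x i) ^ 2 = ‖x‖ ^ 2 := by
  rw [← real_inner_self_eq_norm_sq, PiLp.inner_apply]
  simp [sq]

/-- The explicit first-derivative-in-direction-`i` function of `Mr lam u`. -/
def gFun {n : ℕ} (lam : ℝ) (u : E n → ℂ) (i : Fin n) (y : E n) : ℂ :=
  (((1 - ‖y‖ ^ 2) ^ lam : ℝ) : ℂ) * fderiv ℝ u y (EuclideanSpace.single i (1:ℝ))
    + (((-2 * lam : ℝ) : ℂ) * (((1 - ‖y‖ ^ 2) ^ (lam - 1) : ℝ) : ℂ))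
        * (((y i : ℝ) : ℂ) * u y)

end Stmt4Aux


/-- the correspondence principle
`L_θ M^λ = M^λ L_{θ-λ} + 4λ(λ-1-2θ) M^{λ-1}`. -/
theorem stmt4 (n : ℕ) (hn : 2 ≤ n) (θ lam : ℝ) (u : E n → ℂ)
    (hu : ContDiffOn ℝ 2 u (unitBall n)) :
    ∀ x ∈ unitBall n,
      Lop θ (Mr lam u) x =
        Mr lam (Lop (θ - lam) u) x
          + ((4 * lam * (lam - 1 - 2 * θ) : ℝ) : ℂ) * Mr (lam - 1) u x := by
  intro x hxB
  have hx : ‖x‖ < 1 := by simpa [unitBall, mem_ball_zero_iff] using hxB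
  have hpos : (0:ℝ) < 1 - ‖x‖ ^ 2 := by nlinarith [norm_nonneg x]
  have hCD : ∀ y : E n, ‖y‖ < 1 → ContDiffAt ℝ 2 u y := by
    intro y hy
    exact hu.contDiffAt (Metric.isOpen_ball.mem_nhds (mem_ball_zero_iff.mpr hy))
  have hud : ∀ y : E n, ‖y‖ < 1 → DifferentiableAt ℝ u y := fun y hy =>
    (hCD y hy).differentiableAt two_ne_zero
  -- first derivative of Mr lam u
  have hF : ∀ y : E n, ‖y‖ < 1 → HasFDerivAt (Mr lam u)
      ((((1 - ‖y‖ ^ 2) ^ lam : ℝ) : ℂ) • fderiv ℝ u y + u y • dV lam y) y := by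
    intro y hy
    exact (hasFDerivAt_V lam hy).mul (hud y hy).hasFDerivAt
  -- u is C² at x, so second derivatives exist
  have hfd : DifferentiableAt ℝ (fderiv ℝ u) x := by
    have h2 : ContDiffAt ℝ 1 (fderiv ℝ u) x := (hCD x hx).fderiv_right (le_refl 2)
    exact h2.differentiableAt one_ne_zero
  have hDui : ∀ i : Fin n,
      DifferentiableAt ℝ (fun y => fderiv ℝ u y (EuclideanSpace.single i (1:ℝ))) x := by
    intro i
    exact (ContinuousLinearMap.apply ℝ ℂ (EuclideanSpace.single i (1:ℝ))).differentiableAt.comp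
      x hfd
  -- coordinate function derivative
  have hCi : ∀ i : Fin n, HasFDerivAt (fun y : E n => ((y i : ℝ) : ℂ))
      (Complex.ofRealCLM.comp (innerSL ℝ (EuclideanSpace.single i (1:ℝ)))) x := by
    intro i
    have heq : (fun y : E n => ((y i : ℝ) : ℂ)) =
        ⇑(Complex.ofRealCLM.comp (innerSL ℝ (EuclideanSpace.single i (1:ℝ)))) := by
      funext y
      simp [EuclideanSpace.inner_single_left]
    rw [heq]
    exact (Complex.ofRealCLM.comp (innerSL ℝ (EuclideanSpace.single i (1:ℝ)))).hasFDerivAt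
  -- second derivative of Mr lam u in direction i
  have hg : ∀ i : Fin n, HasFDerivAt (gFun lam u i)
      (((((1 - ‖x‖ ^ 2) ^ lam : ℝ) : ℂ) •
          fderiv ℝ (fun y => fderiv ℝ u y (EuclideanSpace.single i (1:ℝ))) x
        + fderiv ℝ u x (EuclideanSpace.single i (1:ℝ)) • dV lam x)
       + ((((-2 * lam : ℝ) : ℂ) * (((1 - ‖x‖ ^ 2) ^ (lam - 1) : ℝ) : ℂ)) •
            (((x i : ℝ) : ℂ) • fderiv ℝ u x
              + u x • (Complex.ofRealCLM.comp (innerSL ℝ (EuclideanSpace.single i (1:ℝ)))))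
          + (((x i : ℝ) : ℂ) * u x) •
              (((-2 * lam : ℝ) : ℂ) • dV (lam - 1) x))) x := by
    intro i
    exact ((hasFDerivAt_V lam hx).mul (hDui i).hasFDerivAt).add
      ((((hasFDerivAt_V (lam - 1) hx).const_mul (((-2 * lam : ℝ) : ℂ))).mul
        ((hCi i).mul (hud x hx).hasFDerivAt)))
  -- eventual equality of first-derivative-in-direction-i with gFun
  have hmem : ∀ᶠ y in nhds x, ‖y‖ < 1 := by
    filter_upwards [Metric.isOpen_ball.mem_nhds (mem_ball_zero_iff.mpr hx)] with y hy
    exact mem_ball_zero_iff.mp hy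
  have hev : ∀ i : Fin n, (fun y => fderiv ℝ (Mr lam u) y (EuclideanSpace.single i (1:ℝ)))
      =ᶠ[nhds x] gFun lam u i := by
    intro i
    filter_upwards [hmem] with y hy
    rw [(hF y hy).fderiv]
    simp only [ContinuousLinearMap.add_apply, ContinuousLinearMap.smul_apply, smul_eq_mul,
      dV_single, gFun]
    push_cast
    ring
  -- key: value of each second partial
  have key : ∀ i : Fin n,
      fderiv ℝ (fun y => fderiv ℝ (Mr lam u) y (EuclideanSpace.single i (1:ℝ))) x
        (EuclideanSpace.single i (1:ℝ)) =
      (((1 - ‖x‖ ^ 2) ^ lam : ℝ) : ℂ) *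
          fderiv ℝ (fun y => fderiv ℝ u y (EuclideanSpace.single i (1:ℝ))) x
            (EuclideanSpace.single i (1:ℝ))
        + ((-4 * lam * (1 - ‖x‖ ^ 2) ^ (lam - 1) : ℝ) : ℂ) *
            (((x i : ℝ) : ℂ) * fderiv ℝ u x (EuclideanSpace.single i (1:ℝ)))
        + ((-2 * lam * (1 - ‖x‖ ^ 2) ^ (lam - 1) : ℝ) : ℂ) * u x
        + ((4 * lam * (lam - 1) * (1 - ‖x‖ ^ 2) ^ (lam - 1 - 1) : ℝ) : ℂ) *
            (((x i : ℝ) : ℂ) ^ 2 * u x) := by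
    intro i
    rw [(hev i).fderiv_eq, (hg i).fderiv]
    simp only [ContinuousLinearMap.add_apply, ContinuousLinearMap.smul_apply, smul_eq_mul,
      dV_single, ContinuousLinearMap.comp_apply, innerSL_apply_apply, Complex.ofRealCLM_apply,
      EuclideanSpace.inner_single_left, EuclideanSpace.single_apply]
    push_cast
    simp
    ring
  -- sum identities
  have hRsum : ∑ i, (((x i : ℝ) : ℂ) * fderiv ℝ u x (EuclideanSpace.single i (1:ℝ)))
      = fderiv ℝ u x x := (clm_apply_self (fderiv ℝ u x) x).symm
  have hSsum : ∑ i, ((x i : ℝ) : ℂ) ^ 2 = ((‖x‖ ^ 2 : ℝ) : ℂ) := by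
    rw [← sum_sq x]
    push_cast
    rfl
  -- the Laplacian of Mr lam u
  have hlap : lap (Mr lam u) x =
      (((1 - ‖x‖ ^ 2) ^ lam : ℝ) : ℂ) * lap u x
        + ((-4 * lam * (1 - ‖x‖ ^ 2) ^ (lam - 1) : ℝ) : ℂ) * fderiv ℝ u x x
        + (n : ℂ) * (((-2 * lam * (1 - ‖x‖ ^ 2) ^ (lam - 1) : ℝ) : ℂ) * u x)
        + ((4 * lam * (lam - 1) * (1 - ‖x‖ ^ 2) ^ (lam - 1 - 1) : ℝ) : ℂ) *
            (((‖x‖ ^ 2 : ℝ) : ℂ) * u x) := by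
    rw [show lap (Mr lam u) x = ∑ i, fderiv ℝ
        (fun y => fderiv ℝ (Mr lam u) y (EuclideanSpace.single i (1:ℝ))) x
        (EuclideanSpace.single i (1:ℝ)) from rfl]
    rw [show lap u x = ∑ i, fderiv ℝ
        (fun y => fderiv ℝ u y (EuclideanSpace.single i (1:ℝ))) x
        (EuclideanSpace.single i (1:ℝ)) from rfl]
    rw [Finset.sum_congr rfl fun i _ => key i]
    simp only [Finset.sum_add_distrib, ← Finset.mul_sum, ← Finset.sum_mul, hRsum, hSsum,
      Finset.sum_const, Finset.card_univ, Fintype.card_fin, nsmul_eq_mul]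
    ring
  -- the radial derivative of Mr lam u
  have hrad : radialDeriv (Mr lam u) x =
      (((1 - ‖x‖ ^ 2) ^ lam : ℝ) : ℂ) * fderiv ℝ u x x
        + ((-2 * lam * (1 - ‖x‖ ^ 2) ^ (lam - 1) * ‖x‖ ^ 2 : ℝ) : ℂ) * u x := by
    rw [radialDeriv, (hF x hx).fderiv]
    simp only [ContinuousLinearMap.add_apply, ContinuousLinearMap.smul_apply, smul_eq_mul,
      dV_self]
    ring
  -- rpow bookkeeping
  have Hpow1 : (1 - ‖x‖ ^ 2) ^ (lam - 1) = (1 - ‖x‖ ^ 2) ^ (lam - 1 - 1) * (1 - ‖x‖ ^ 2) := by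
    have h := Real.rpow_add hpos (lam - 1 - 1) 1
    rw [Real.rpow_one, show lam - 1 - 1 + 1 = lam - 1 from by ring] at h
    exact h
  have Hpow0 : (1 - ‖x‖ ^ 2) ^ lam =
      (1 - ‖x‖ ^ 2) ^ (lam - 1 - 1) * (1 - ‖x‖ ^ 2) * (1 - ‖x‖ ^ 2) := by
    have h := Real.rpow_add hpos (lam - 1) 1
    rw [Real.rpow_one, show lam - 1 + 1 = lam from by ring, Hpow1] at h
    exact h
  -- final algebra
  simp only [Lop]
  rw [hlap, hrad]
  simp only [Lop, Mr, radialDeriv]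
  rw [Hpow0, Hpow1]
  push_cast
  ring
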